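/- Let y_1,...,y_{r−2} be a basis of R^{r−2} and define recursively y_t = −Σ_{j=t−r+2}^{t−1} y_j for r−1 ≤ t ≤ k−1. Then for every i with 1 ≤ i ≤ k−r+1, the vectors y_i, y_{i+1}, ..., y_{i+r−3} are linearly independent, and for every j with 1 ≤ j ≤ k−r+1, Σ_{s=j}^{j+r−2} y_s = 0. -/

import Mathlib

open SimpleGraph Finset

def cube (d : ℕ) : SimpleGraph (Fin d → ZMod 2) :=
  SimpleGraph.fromRel (fun u v => ∃ i, u i ≠ v i ∧ ∀ j, j ≠ i → u j = v j)

def grid (k d : ℕ) : SimpleGraph (Fin d → Fin k) :=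
  SimpleGraph.fromRel (fun u v => ∃ i, ((u i : ℕ)) + 1 = (v i : ℕ) ∧ ∀ j, j ≠ i → u j = v j)

def CopyAt {α β : Type*} (H : SimpleGraph α) (G : SimpleGraph β) (u v : β) : Prop :=
  ∃ f : α → β, Function.Injective f ∧ (∀ ⦃a b⦄, H.Adj a b → G.Adj (f a) (f b)) ∧
    ∃ a b, H.Adj a b ∧ f a = u ∧ f b = v

def ContainsCopy {α β : Type*} (H : SimpleGraph α) (G : SimpleGraph β) : Prop :=
  ∃ f : α → β, Function.Injective f ∧ ∀ ⦃a b⦄, H.Adj a b → G.Adj (f a) (f b)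

def WeaklySaturated {α β : Type*} (F G : SimpleGraph β) (H : SimpleGraph α) : Prop :=
  G ≤ F ∧ ∃ (n : ℕ) (seq : ℕ → SimpleGraph β), seq 0 = G ∧ seq n = F ∧
    ∀ i < n, ∃ u v : β, ¬ (seq i).Adj u v ∧ F.Adj u v ∧
      seq (i + 1) = seq i ⊔ SimpleGraph.fromEdgeSet {s(u, v)} ∧
      CopyAt H (seq (i + 1)) u v

noncomputable def wsatNum {α β : Type*} (F : SimpleGraph β) (H : SimpleGraph α) : ℕ :=
  sInf {n | ∃ G, WeaklySaturated F G H ∧ G.edgeSet.ncard = n}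

def Saturated {α β : Type*} (F G : SimpleGraph β) (H : SimpleGraph α) : Prop :=
  G ≤ F ∧ ¬ ContainsCopy H G ∧ ∀ u v : β, F.Adj u v → ¬ G.Adj u v →
    ContainsCopy H (G ⊔ SimpleGraph.fromEdgeSet {s(u, v)})

noncomputable def satNum {α β : Type*} (F : SimpleGraph β) (H : SimpleGraph α) : ℕ :=
  sInf {n | ∃ G, Saturated F G H ∧ G.edgeSet.ncard = n}

theorem stmt_13 (r k : ℕ) (hr : 2 ≤ r) (hk : r ≤ k)
    (y : ℕ → (Fin (r - 2) → ℝ))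
    (hli : LinearIndependent ℝ (fun i : Fin (r - 2) => y (i.val + 1)))
    (hspan : Submodule.span ℝ (Set.range (fun i : Fin (r - 2) => y (i.val + 1))) = ⊤)
    (hrec : ∀ t, r - 1 ≤ t → t ≤ k - 1 →
      y t = -∑ j ∈ Finset.Ico (t + 2 - r) t, y j) :
    (∀ i, 1 ≤ i → i ≤ k - r + 1 →
      LinearIndependent ℝ (fun s : Fin (r - 2) => y (i + s.val))) ∧
    (∀ j, 1 ≤ j → j ≤ k - r + 1 → ∑ s ∈ Finset.Icc j (j + r - 2), y s = 0) := by
  have hsum : ∀ j, 1 ≤ j → j ≤ k - r + 1 → ∑ s ∈ Finset.Icc j (j + r - 2), y s = 0 := by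
    intro j hj1 hj2
    have h := hrec (j + r - 2) (by omega) (by omega)
    have hj' : j + r - 2 + 2 - r = j := by omega
    rw [hj'] at h
    have hle : j ≤ j + r - 2 := by omega
    rw [← Finset.Ico_insert_right hle,
      Finset.sum_insert Finset.right_notMem_Ico, h]
    exact neg_add_cancel _
  have hspan' : ∀ i, 1 ≤ i → i ≤ k - r + 1 →
      Submodule.span ℝ (Set.range (fun s : Fin (r - 2) => y (i + s.val))) = ⊤ := by
    intro i hi
    induction i, hi using Nat.le_induction with
    | base =>
      intro _
      have he : (fun s : Fin (r - 2) => y (1 + s.val)) =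
          fun s : Fin (r - 2) => y (s.val + 1) := by
        funext s; rw [add_comm]
      rw [he]; exact hspan
    | succ n hn ih =>
      intro hle
      have hn' : n ≤ k - r + 1 := by omega
      have hsp := ih hn'
      rw [eq_top_iff, ← hsp]
      apply Submodule.span_le.mpr
      rintro v ⟨s, rfl⟩
      have hslt := s.isLt
      show y (n + s.val) ∈ _
      by_cases hs : s.val = 0
      · have hy : y (n + s.val) = y n := by rw [hs, add_zero]
        rw [hy]
        have h0 := hsum n hn hn'
        have hset : Finset.Icc n (n + r - 2) = insert n (Finset.Icc (n + 1) (n + r - 2)) := by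
          ext x; simp [Finset.mem_Icc]; omega
        rw [hset, Finset.sum_insert (by simp [Finset.mem_Icc])] at h0
        rw [eq_neg_of_add_eq_zero_left h0]
        apply Submodule.neg_mem
        apply Submodule.sum_mem
        intro u hu
        simp only [Finset.mem_Icc] at hu
        apply Submodule.subset_span
        refine ⟨⟨u - (n + 1), by omega⟩, ?_⟩
        exact congrArg y (by omega : n + 1 + (u - (n + 1)) = u)
      · apply Submodule.subset_span
        refine ⟨⟨s.val - 1, by omega⟩, ?_⟩
        exact congrArg y (by omega : n + 1 + (s.val - 1) = n + s.val)
  refine ⟨?_, hsum⟩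
  intro i hi1 hi2
  apply linearIndependent_of_top_le_span_of_card_eq_finrank
  · exact (hspan' i hi1 hi2).ge
  · simp [Module.finrank_fin_fun]
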